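/- In the triangular grid, if a relative address (a,b,c) has at least one component equal to zero and the two other components do not have the same sign (i.e., their product is ≤ 0), then the corresponding path of |a| + |b| + |c| unit steps is a shortest path; conversely, any address of shortest path form satisfies these conditions. -/

import Mathlib

/-- The triangular grid on `ℤ²`: each vertex is adjacent to its six neighbours
obtained by adding `±i, ±j, ±k`, where `i = (1,0)`, `j = (0,1)`, `k = (-1,-1)`. -/
def triGraph : SimpleGraph (ℤ × ℤ) where
  Adj u v := (u.1 - v.1 = 1 ∧ u.2 - v.2 = 0) ∨ (u.1 - v.1 = -1 ∧ u.2 - v.2 = 0) ∨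
    (u.1 - v.1 = 0 ∧ u.2 - v.2 = 1) ∨ (u.1 - v.1 = 0 ∧ u.2 - v.2 = -1) ∨
    (u.1 - v.1 = 1 ∧ u.2 - v.2 = 1) ∨ (u.1 - v.1 = -1 ∧ u.2 - v.2 = -1)
  symm := by constructor; intro u v h; omega
  loopless := by constructor; intro v h; omega

/-- The vector denoted by the address `(a,b,c)`, i.e. `a·i + b·j + c·k`. -/
def triVec (a b c : ℤ) : ℤ × ℤ := a • ((1 : ℤ), (0 : ℤ)) + b • ((0 : ℤ), (1 : ℤ)) + c • ((-1 : ℤ), (-1 : ℤ))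

/-- Hex distance potential. -/
def triF (p : ℤ × ℤ) : ℕ := max (max p.1.natAbs p.2.natAbs) (p.1 - p.2).natAbs

lemma triAdj_iff (u v : ℤ × ℤ) : triGraph.Adj u v ↔
    ((u.1 - v.1 = 1 ∧ u.2 - v.2 = 0) ∨ (u.1 - v.1 = -1 ∧ u.2 - v.2 = 0) ∨
    (u.1 - v.1 = 0 ∧ u.2 - v.2 = 1) ∨ (u.1 - v.1 = 0 ∧ u.2 - v.2 = -1) ∨
    (u.1 - v.1 = 1 ∧ u.2 - v.2 = 1) ∨ (u.1 - v.1 = -1 ∧ u.2 - v.2 = -1)) := Iff.rfl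

lemma triF_le_walk {u v : ℤ × ℤ} (w : triGraph.Walk u v) :
    triF (v.1 - u.1, v.2 - u.2) ≤ w.length := by
  induction w with
  | nil => simp [triF]
  | cons h w ih =>
    rw [triAdj_iff] at h
    simp only [SimpleGraph.Walk.length_cons]
    simp only [triF] at ih ⊢
    omega

lemma triF_step (p : ℤ × ℤ) (hp : p ≠ 0) :
    ∃ q : ℤ × ℤ, triGraph.Adj q p ∧ triF q + 1 = triF p := by
  have hp' : p.1 ≠ 0 ∨ p.2 ≠ 0 := by
    by_contra h
    push_neg at h
    exact hp (Prod.ext h.1 h.2)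
  rcases lt_trichotomy p.1 0 with h1 | h1 | h1 <;>
    rcases lt_trichotomy p.2 0 with h2 | h2 | h2
  · exact ⟨(p.1 + 1, p.2 + 1), by rw [triAdj_iff]; dsimp only; omega, by simp only [triF]; omega⟩
  · exact ⟨(p.1 + 1, p.2), by rw [triAdj_iff]; dsimp only; omega, by simp only [triF]; omega⟩
  · exact ⟨(p.1 + 1, p.2), by rw [triAdj_iff]; dsimp only; omega, by simp only [triF]; omega⟩
  · exact ⟨(p.1, p.2 + 1), by rw [triAdj_iff]; dsimp only; omega, by simp only [triF]; omega⟩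
  · exact absurd (Prod.ext h1 h2) hp
  · exact ⟨(p.1, p.2 - 1), by rw [triAdj_iff]; dsimp only; omega, by simp only [triF]; omega⟩
  · exact ⟨(p.1 - 1, p.2), by rw [triAdj_iff]; dsimp only; omega, by simp only [triF]; omega⟩
  · exact ⟨(p.1 - 1, p.2), by rw [triAdj_iff]; dsimp only; omega, by simp only [triF]; omega⟩
  · exact ⟨(p.1 - 1, p.2 - 1), by rw [triAdj_iff]; dsimp only; omega, by simp only [triF]; omega⟩

lemma triF_walk (n : ℕ) : ∀ p : ℤ × ℤ, triF p = n →
    ∃ w : triGraph.Walk 0 p, w.length = n := by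
  induction n with
  | zero =>
    intro p hp
    have h1 : p.1 = 0 ∧ p.2 = 0 := by simp [triF] at hp; omega
    have : p = 0 := Prod.ext h1.1 h1.2
    subst this
    exact ⟨SimpleGraph.Walk.nil, rfl⟩
  | succ n ih =>
    intro p hp
    have hp0 : p ≠ 0 := by
      rintro rfl
      simp [triF] at hp
    obtain ⟨q, hadj, hq⟩ := triF_step p hp0
    obtain ⟨w, hw⟩ := ih q (by omega)
    exact ⟨w.concat hadj, by simp [hw]⟩

lemma triDist_eq (p : ℤ × ℤ) : triGraph.dist 0 p = triF p := by
  obtain ⟨w, hw⟩ := triF_walk (triF p) p rfl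
  refine le_antisymm (hw ▸ SimpleGraph.dist_le w) ?_
  obtain ⟨w', hw'⟩ := (SimpleGraph.Walk.reachable w).exists_walk_length_eq_dist
  have := triF_le_walk w'
  simpa [hw'] using this

/-- An address `(a,b,c)` is of shortest path form (the corresponding path of
`|a| + |b| + |c|` unit steps is a shortest path) if and only if at least one
component is zero and the two other components do not have the same sign. -/
theorem triVec_shortest_form_iff (a b c : ℤ) :
    triGraph.dist 0 (triVec a b c) = (|a| + |b| + |c|).toNat ↔
      ((a = 0 ∧ b * c ≤ 0) ∨ (b = 0 ∧ a * c ≤ 0) ∨ (c = 0 ∧ a * b ≤ 0)) := by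
  have hv : triVec a b c = (a - c, b - c) := by
    simp [triVec, Prod.ext_iff]; constructor <;> ring
  rw [hv, triDist_eq]
  simp only [triF, mul_nonpos_iff, Int.abs_eq_natAbs]
  omega
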